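/- Let α, β ∈ ℝ. Let (u₁,p₁,q₁) and (u₂,p₂,q₂) be two differentiable triples of functions ℝ × ℝ → ℝ (arguments (x,t)), each satisfying the damped string system with parameters α, β: u_t = p, u_x = q, p_t − q_x + u + α p + β q = 0 at every point. Then the exponentially weighted symplectic density is exactly conserved: at every point of ℝ², ∂/∂t [e^{αt − βx} (p₁ u₂ − u₁ p₂)] + ∂/∂x [e^{αt − βx} (u₁ q₂ − q₁ u₂)] = 0. -/

import Mathlib

open Real

private lemma hasDerivT (f : ℝ × ℝ → ℝ) (hf : Differentiable ℝ f) (x t : ℝ) :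
    HasDerivAt (fun s => f (x, s)) (deriv (fun s => f (x, s)) t) t :=
  ((hf.comp ((differentiable_const x).prodMk differentiable_id)) t).hasDerivAt

private lemma hasDerivX (f : ℝ × ℝ → ℝ) (hf : Differentiable ℝ f) (x t : ℝ) :
    HasDerivAt (fun s => f (s, t)) (deriv (fun s => f (s, t)) x) x :=
  ((hf.comp (differentiable_id.prodMk (differentiable_const t))) x).hasDerivAt

/-- For two differentiable solutions `(u₁,p₁,q₁)` and
`(u₂,p₂,q₂)` of the damped string system `u_t = p`, `u_x = q`,
`p_t − q_x + u + α p + β q = 0`, the exponentially weighted symplectic density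
is exactly conserved:
`∂_t [e^{αt−βx}(p₁u₂ − u₁p₂)] + ∂_x [e^{αt−βx}(u₁q₂ − q₁u₂)] = 0`
at every point. -/
theorem damped_string_weighted_symplectic_conservation
    (α β : ℝ) (u₁ p₁ q₁ u₂ p₂ q₂ : ℝ × ℝ → ℝ)
    (hu₁ : Differentiable ℝ u₁) (hp₁ : Differentiable ℝ p₁)
    (hq₁ : Differentiable ℝ q₁)
    (hu₂ : Differentiable ℝ u₂) (hp₂ : Differentiable ℝ p₂)
    (hq₂ : Differentiable ℝ q₂)
    (h₁ : ∀ x t : ℝ,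
      deriv (fun s => u₁ (x, s)) t = p₁ (x, t) ∧
      deriv (fun s => u₁ (s, t)) x = q₁ (x, t) ∧
      deriv (fun s => p₁ (x, s)) t - deriv (fun s => q₁ (s, t)) x
        + u₁ (x, t) + α * p₁ (x, t) + β * q₁ (x, t) = 0)
    (h₂ : ∀ x t : ℝ,
      deriv (fun s => u₂ (x, s)) t = p₂ (x, t) ∧
      deriv (fun s => u₂ (s, t)) x = q₂ (x, t) ∧
      deriv (fun s => p₂ (x, s)) t - deriv (fun s => q₂ (s, t)) x
        + u₂ (x, t) + α * p₂ (x, t) + β * q₂ (x, t) = 0) :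
    ∀ x t : ℝ,
      deriv (fun s =>
          exp (α * s - β * x) *
            (p₁ (x, s) * u₂ (x, s) - u₁ (x, s) * p₂ (x, s))) t
        + deriv (fun s =>
          exp (α * t - β * s) *
            (u₁ (s, t) * q₂ (s, t) - q₁ (s, t) * u₂ (s, t))) x = 0 := by
  intro x t
  obtain ⟨hu1t, hu1x, he1⟩ := h₁ x t
  obtain ⟨hu2t, hu2x, he2⟩ := h₂ x t
  have hwT : HasDerivAt (fun s : ℝ => exp (α * s - β * x))
      (exp (α * t - β * x) * α) t := by
    simpa using (((hasDerivAt_id t).const_mul α).sub_const (β * x)).exp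
  have hwX : HasDerivAt (fun s : ℝ => exp (α * t - β * s))
      (exp (α * t - β * x) * (-β)) x := by
    simpa using (HasDerivAt.const_sub (α * t) ((hasDerivAt_id x).const_mul β)).exp
  have ET := (hwT.mul (((hasDerivT p₁ hp₁ x t).mul (hasDerivT u₂ hu₂ x t)).sub
      ((hasDerivT u₁ hu₁ x t).mul (hasDerivT p₂ hp₂ x t)))).deriv
  have EX := (hwX.mul (((hasDerivX u₁ hu₁ x t).mul (hasDerivX q₂ hq₂ x t)).sub
      ((hasDerivX q₁ hq₁ x t).mul (hasDerivX u₂ hu₂ x t)))).deriv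
  simp only [Pi.mul_def, Pi.sub_def] at ET EX
  rw [ET, EX, hu1t, hu2t, hu1x, hu2x]
  linear_combination (exp (α * t - β * x) * u₂ (x, t)) * he1
    - (exp (α * t - β * x) * u₁ (x, t)) * he2
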